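/- arXiv:math/9908140 — 3 statements merged into one kernel-verified Lean document; each statement's English description precedes it below -/
import Mathlib

section
/- Let q be a real number with q ≠ 1, let n be a positive integer, and let f : ℝ → ℝ be a function defined on an interval (-ρ, ρ) with ρ > 0 whose n-th derivative at x = 0 exists. Then the limit lim_{x → 0} D_q^n f(x) exists and equals (f^(n)(0)/n!) · (q;q)_n/(1-q)^n, where (q;q)_n = ∏_{j=1}^{n} (1 - q^j). -/
open Filter Finset

/-- The `q`-derivative operator: `D_q f x = (f x - f (q x)) / ((1-q) x)` for `x ≠ 0`,
and `D_q f 0 = f'(0)`. -/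
noncomputable def qDeriv (q : ℝ) (f : ℝ → ℝ) : ℝ → ℝ :=
  fun x => if x = 0 then deriv f 0 else (f x - f (q * x)) / ((1 - q) * x)

/-- The `q`-Pochhammer symbol `(a;q)_n = ∏_{j=0}^{n-1} (1 - a q^j)`. -/
noncomputable def qPoch (a q : ℝ) (n : ℕ) : ℝ := ∏ j ∈ Finset.range n, (1 - a * q ^ j)
lemma peano_aux : ∀ (m : ℕ) (f : ℝ → ℝ),
    (∀ k < m, ∀ᶠ x in nhds (0:ℝ), DifferentiableAt ℝ (iteratedDeriv k f) x) →
    DifferentiableAt ℝ (iteratedDeriv m f) 0 →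
    Filter.Tendsto (fun x => (f x - ∑ j ∈ Finset.range (m+2),
        iteratedDeriv j f 0 / (j.factorial : ℝ) * x ^ j) / x ^ (m+1))
      (nhdsWithin (0:ℝ) {0}ᶜ) (nhds 0) := by
  intro m
  induction m with
  | zero =>
    intro f _ hf'
    rw [iteratedDeriv_zero] at hf'
    have h := hf'.hasDerivAt
    rw [hasDerivAt_iff_tendsto_slope] at h
    have h2 := h.sub_const (deriv f 0)
    rw [sub_self] at h2
    refine h2.congr' ?_
    filter_upwards [self_mem_nhdsWithin] with x hx
    have hx0 : x ≠ 0 := hx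
    simp only [slope_def_field, Finset.sum_range_succ, Finset.sum_range_zero,
      iteratedDeriv_zero, iteratedDeriv_one, Nat.factorial]
    field_simp
    ring
  | succ m ih =>
    intro f hf hf'
    have hg : ∀ k < m, ∀ᶠ x in nhds (0:ℝ), DifferentiableAt ℝ (iteratedDeriv k (deriv f)) x := by
      intro k hk
      rw [← iteratedDeriv_succ']
      exact hf (k+1) (by omega)
    have hg' : DifferentiableAt ℝ (iteratedDeriv m (deriv f)) 0 := by
      rw [← iteratedDeriv_succ']; exact hf'
    have ihg := ih (deriv f) hg hg'
    set c : ℕ → ℝ := fun j => iteratedDeriv j f 0 / (j.factorial : ℝ) with hc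
    have hdf : ∀ᶠ x in nhds (0:ℝ), DifferentiableAt ℝ f x := by
      have := hf 0 (by omega); simpa [iteratedDeriv_zero] using this
    set F : ℝ → ℝ := fun x => f x - ∑ j ∈ Finset.range (m+3), c j * x ^ j with hF
    set F' : ℝ → ℝ := fun x => deriv f x
        - ∑ j ∈ Finset.range (m+2), iteratedDeriv j (deriv f) 0 / (j.factorial : ℝ) * x ^ j
      with hF'
    have hpoly : ∀ x : ℝ, HasDerivAt (fun y => ∑ j ∈ Finset.range (m+3), c j * y ^ j)
        (∑ j ∈ Finset.range (m+2), iteratedDeriv j (deriv f) 0 / (j.factorial : ℝ) * x ^ j) x := by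
      intro x
      have h1 : HasDerivAt (fun y => ∑ j ∈ Finset.range (m+3), c j * y ^ j)
          (∑ j ∈ Finset.range (m+3), c j * ((j : ℝ) * x ^ (j-1))) x :=
        HasDerivAt.fun_sum fun j _ => (hasDerivAt_pow j x).const_mul (c j)
      convert h1 using 1
      rw [Finset.sum_range_succ' (fun j => c j * ((j:ℝ) * x ^ (j-1))) (m+2)]
      simp only [Nat.cast_zero, zero_mul, mul_zero, add_zero]
      refine Finset.sum_congr rfl fun j _ => ?_
      simp only [hc, ← iteratedDeriv_succ', Nat.add_sub_cancel, Nat.factorial_succ]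
      have hj : ((j:ℝ)+1) ≠ 0 := by positivity
      have hfac : ((j.factorial : ℝ)) ≠ 0 := Nat.cast_ne_zero.2 j.factorial_ne_zero
      push_cast
      field_simp
    have hFF' : ∀ᶠ x in nhdsWithin (0:ℝ) {0}ᶜ, HasDerivAt F (F' x) x := by
      have : ∀ᶠ x in nhds (0:ℝ), HasDerivAt F (F' x) x := by
        filter_upwards [hdf] with x hx
        exact hx.hasDerivAt.sub (hpoly x)
      exact eventually_nhdsWithin_of_eventually_nhds this
    have hGG' : ∀ᶠ x in nhdsWithin (0:ℝ) {0}ᶜ,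
        HasDerivAt (fun y : ℝ => y ^ (m+2)) (((m+2:ℕ):ℝ) * x ^ (m+1)) x := by
      filter_upwards with x
      simpa using hasDerivAt_pow (m+2) x
    have hG' : ∀ᶠ x in nhdsWithin (0:ℝ) {0}ᶜ, ((m+2:ℕ):ℝ) * x ^ (m+1) ≠ 0 := by
      filter_upwards [self_mem_nhdsWithin] with x hx
      have hx0 : x ≠ 0 := hx
      positivity
    have hfa : Filter.Tendsto F (nhdsWithin (0:ℝ) {0}ᶜ) (nhds 0) := by
      have hc0 : ContinuousAt F 0 := by
        have : DifferentiableAt ℝ F 0 := (hdf.self_of_nhds).sub (hpoly 0).differentiableAt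
        exact this.continuousAt
      have hF0 : F 0 = 0 := by
        simp only [hF]
        rw [Finset.sum_eq_single 0 (fun b _ hb => by simp [zero_pow hb]) (by simp)]
        simp [hc]
      have := hc0.tendsto
      rw [hF0] at this
      exact this.mono_left nhdsWithin_le_nhds
    have hga : Filter.Tendsto (fun y : ℝ => y ^ (m+2)) (nhdsWithin (0:ℝ) {0}ᶜ) (nhds 0) := by
      have : Filter.Tendsto (fun y : ℝ => y ^ (m+2)) (nhds 0) (nhds ((0:ℝ)^(m+2))) :=
        (continuous_pow (m+2)).tendsto 0
      rw [zero_pow (by omega)] at this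
      exact this.mono_left nhdsWithin_le_nhds
    have hdiv : Filter.Tendsto (fun x => F' x / (((m+2:ℕ):ℝ) * x ^ (m+1)))
        (nhdsWithin (0:ℝ) {0}ᶜ) (nhds 0) := by
      have h2 := ihg.const_mul (((m+2:ℕ):ℝ))⁻¹
      rw [mul_zero] at h2
      refine h2.congr' ?_
      filter_upwards with x
      simp only [hF']
      rw [div_mul_eq_div_div_swap, div_eq_mul_inv _ ((((m+2:ℕ)):ℝ)), mul_comm]
    have := HasDerivAt.lhopital_zero_nhdsNE hFF' hGG' hG' hfa hga hdiv
    refine this.congr' ?_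
    filter_upwards with x
    rfl

lemma tendsto_lower (n : ℕ) (f : ℝ → ℝ) (c : ℕ → ℝ)
    (hp : Filter.Tendsto (fun x => (f x - ∑ j ∈ Finset.range (n+1), c j * x ^ j) / x ^ n)
      (nhdsWithin (0:ℝ) {0}ᶜ) (nhds 0)) (m : ℕ) (hm : m ≤ n) :
    Filter.Tendsto (fun x => (f x - ∑ j ∈ Finset.range m, c j * x ^ j) / x ^ m)
      (nhdsWithin (0:ℝ) {0}ᶜ) (nhds (c m)) := by
  obtain ⟨k, rfl⟩ : ∃ k, n = m + k := ⟨n - m, by omega⟩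
  have h1 : Filter.Tendsto (fun x : ℝ => x ^ k) (nhdsWithin (0:ℝ) {0}ᶜ)
      (nhds ((0:ℝ) ^ k)) := ((continuous_pow k).tendsto 0).mono_left nhdsWithin_le_nhds
  have h2 := hp.mul h1
  rw [zero_mul] at h2
  have h3 : Filter.Tendsto (fun x : ℝ => ∑ j ∈ Finset.range (k+1), c (m+j) * x ^ j)
      (nhdsWithin (0:ℝ) {0}ᶜ)
      (nhds (∑ j ∈ Finset.range (k+1), c (m+j) * (0:ℝ) ^ j)) := by
    exact ((continuous_finset_sum _ fun j _ =>
      continuous_const.mul (continuous_pow j)).tendsto 0).mono_left nhdsWithin_le_nhds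
  have hval : (∑ j ∈ Finset.range (k+1), c (m+j) * (0:ℝ) ^ j) = c m := by
    rw [Finset.sum_eq_single 0 (fun b _ hb => by simp [zero_pow hb]) (fun h => by simp at h)]
    simp
  rw [hval] at h3
  have h4 := h2.add h3
  rw [zero_add] at h4
  refine h4.congr' ?_
  filter_upwards [self_mem_nhdsWithin] with x hx
  have hx0 : x ≠ 0 := hx
  have hsplit : (∑ j ∈ Finset.range (m+k+1), c j * x ^ j)
      = (∑ j ∈ Finset.range m, c j * x ^ j)
        + x ^ m * ∑ j ∈ Finset.range (k+1), c (m+j) * x ^ j := by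
    have he : m+k+1 = m + (k+1) := by omega
    rw [he, Finset.sum_range_add, Finset.mul_sum]
    congr 1
    refine Finset.sum_congr rfl fun j _ => ?_
    rw [pow_add]; ring
  have hxn : x ^ (m+k) = x ^ m * x ^ k := pow_add x m k
  rw [hsplit, hxn]
  field_simp
  ring
noncomputable def qw (q : ℝ) : ℕ → ℕ → ℝ
  | 0, 0 => 1
  | 0, _ + 1 => 0
  | n + 1, 0 => qw q n 0
  | n + 1, k + 1 => qw q n (k + 1) - q⁻¹ ^ n * qw q n k

lemma qw_gt (q : ℝ) : ∀ n k : ℕ, n < k → qw q n k = 0 := by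
  intro n
  induction n with
  | zero => intro k hk; match k, hk with | k+1, _ => rfl
  | succ n ih =>
    intro k hk
    match k, hk with
    | k+1, hk =>
      show qw q n (k+1) - q⁻¹ ^ n * qw q n k = 0
      rw [ih (k+1) (by omega), ih k (by omega), mul_zero, sub_zero]

lemma qw_sum (q : ℝ) (n : ℕ) (g : ℕ → ℝ) :
    ∑ k ∈ Finset.range (n+2), qw q (n+1) k * g k
      = ∑ k ∈ Finset.range (n+1), qw q n k * g k
        - q⁻¹ ^ n * ∑ k ∈ Finset.range (n+1), qw q n k * g (k+1) := by
  have hext : ∑ k ∈ Finset.range (n+1), qw q n k * g k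
      = ∑ k ∈ Finset.range (n+2), qw q n k * g k := by
    rw [Finset.sum_range_succ _ (n+1), qw_gt q n (n+1) (by omega), zero_mul, add_zero]
  rw [hext, Finset.sum_range_succ' (fun k => qw q (n+1) k * g k) (n+1),
    Finset.sum_range_succ' (fun k => qw q n k * g k) (n+1)]
  show (∑ k ∈ Finset.range (n+1), qw q (n+1) (k+1) * g (k+1)) + qw q (n+1) 0 * g 0
    = ((∑ k ∈ Finset.range (n+1), qw q n (k+1) * g (k+1)) + qw q n 0 * g 0)
      - q⁻¹ ^ n * ∑ k ∈ Finset.range (n+1), qw q n k * g (k+1)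
  have h0 : qw q (n+1) 0 = qw q n 0 := rfl
  have h1 : ∀ k, qw q (n+1) (k+1) * g (k+1)
      = qw q n (k+1) * g (k+1) - q⁻¹ ^ n * (qw q n k * g (k+1)) := by
    intro k
    show (qw q n (k+1) - q⁻¹ ^ n * qw q n k) * g (k+1) = _
    ring
  rw [Finset.sum_congr rfl fun k _ => h1 k, Finset.sum_sub_distrib, ← Finset.mul_sum, h0]
  ring

lemma qw_pow (q : ℝ) (j : ℕ) : ∀ n : ℕ,
    ∑ k ∈ Finset.range (n+1), qw q n k * (q^j)^k
      = ∏ i ∈ Finset.range n, (1 - q^j * q⁻¹^i) := by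
  intro n
  induction n with
  | zero => rw [Finset.sum_range_one, Finset.prod_range_zero]; simp [qw]
  | succ n ih =>
    rw [qw_sum q n (fun k => (q^j)^k)]
    have h2 : ∑ k ∈ Finset.range (n+1), qw q n k * (q^j)^(k+1)
        = q^j * ∑ k ∈ Finset.range (n+1), qw q n k * (q^j)^k := by
      rw [Finset.mul_sum]
      exact Finset.sum_congr rfl fun k _ => by rw [pow_succ]; ring
    rw [h2, ih, Finset.prod_range_succ]
    ring

lemma qDeriv_iterate_formula (q : ℝ) (hq0 : q ≠ 0) (hq1 : q ≠ 1) (f : ℝ → ℝ) :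
    ∀ (n : ℕ) (x : ℝ), x ≠ 0 → (qDeriv q)^[n] f x
      = (∑ k ∈ Finset.range (n+1), qw q n k * f (q ^ k * x)) / ((1 - q) ^ n * x ^ n) := by
  have h1q : (1:ℝ) - q ≠ 0 := sub_ne_zero.2 (Ne.symm hq1)
  intro n
  induction n with
  | zero => intro x hx; show f x = _; simp [qw]
  | succ n ih =>
    intro x hx
    have hqx : q * x ≠ 0 := mul_ne_zero hq0 hx
    rw [Function.iterate_succ_apply']
    have hd : qDeriv q ((qDeriv q)^[n] f) x
        = ((qDeriv q)^[n] f x - (qDeriv q)^[n] f (q*x)) / ((1-q)*x) := by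
      rw [qDeriv]; simp [hx]
    rw [hd, ih x hx, ih (q*x) hqx]
    have hT : (∑ k ∈ Finset.range (n+1), qw q n k * f (q ^ k * (q * x)))
        = ∑ k ∈ Finset.range (n+1), qw q n k * f (q ^ (k+1) * x) :=
      Finset.sum_congr rfl fun k _ => by rw [show q^k * (q*x) = q^(k+1) * x by ring]
    rw [hT, qw_sum q n (fun k => f (q^k * x))]
    have hqn : (q:ℝ)^n ≠ 0 := pow_ne_zero _ hq0
    have hxn : (x:ℝ)^n ≠ 0 := pow_ne_zero _ hx
    have h1qn : ((1:ℝ)-q)^n ≠ 0 := pow_ne_zero _ h1q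
    simp only [inv_pow]
    field_simp
    ring

/-- If `f^{(n)}(0)` exists, then `lim_{x → 0} D_q^n f x = (f^{(n)}(0)/n!) ⬝ (q;q)_n/(1-q)^n`. -/
theorem tendsto_qDeriv_iterate (q : ℝ) (hq : q ≠ 1) (n : ℕ) (hn : 0 < n)
    (f : ℝ → ℝ)
    (hf : ∀ k < n - 1, ∀ᶠ x in nhds (0 : ℝ), DifferentiableAt ℝ (iteratedDeriv k f) x)
    (hf' : DifferentiableAt ℝ (iteratedDeriv (n - 1) f) 0) :
    Filter.Tendsto ((qDeriv q)^[n] f) (nhdsWithin (0 : ℝ) {0}ᶜ)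
      (nhds (iteratedDeriv n f 0 / n.factorial * (qPoch q q n / (1 - q) ^ n))) := by
  obtain ⟨m, rfl⟩ : ∃ m, n = m + 1 := ⟨n - 1, by omega⟩
  simp only [Nat.add_sub_cancel] at hf hf'
  set c : ℕ → ℝ := fun j => iteratedDeriv j f 0 / (j.factorial : ℝ) with hc
  have hpeano : Filter.Tendsto
      (fun x => (f x - ∑ j ∈ Finset.range (m+1+1), c j * x ^ j) / x ^ (m+1))
      (nhdsWithin (0:ℝ) {0}ᶜ) (nhds 0) := peano_aux m f hf hf'
  by_cases hq0 : q = 0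
  · subst hq0
    have key : ∀ p, p ≤ m+1 →
        (∀ x : ℝ, x ≠ 0 →
          (qDeriv 0)^[p] f x = (f x - ∑ j ∈ Finset.range p, c j * x ^ j) / x ^ p)
        ∧ (qDeriv 0)^[p] f 0 = c p := by
      intro p
      induction p with
      | zero =>
        intro _
        refine ⟨fun x hx => by simp, by simp [hc]⟩
      | succ p ih =>
        intro hp
        obtain ⟨hform, hval⟩ := ih (by omega)
        have hslope : ∀ x : ℝ, x ≠ 0 →
            ((qDeriv 0)^[p] f x - (qDeriv 0)^[p] f 0) / x
              = (f x - ∑ j ∈ Finset.range (p+1), c j * x ^ j) / x ^ (p+1) := by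
          intro x hx
          rw [hform x hx, hval, Finset.sum_range_succ]
          have hxp : x ^ p ≠ 0 := pow_ne_zero _ hx
          field_simp
          ring
        constructor
        · intro x hx
          rw [Function.iterate_succ_apply']
          have hd : qDeriv 0 ((qDeriv 0)^[p] f) x
              = ((qDeriv 0)^[p] f x - (qDeriv 0)^[p] f 0) / x := by
            rw [qDeriv]; simp [hx]
          rw [hd, hslope x hx]
        · rw [Function.iterate_succ_apply']
          have h0 : qDeriv 0 ((qDeriv 0)^[p] f) 0 = deriv ((qDeriv 0)^[p] f) 0 := by
            rw [qDeriv]; simp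
          rw [h0]
          have hder : HasDerivAt ((qDeriv 0)^[p] f) (c (p+1)) 0 := by
            rw [hasDerivAt_iff_tendsto_slope]
            have hl := tendsto_lower (m+1) f c hpeano (p+1) (by omega)
            refine hl.congr' ?_
            filter_upwards [self_mem_nhdsWithin] with x hx
            have hx0 : x ≠ 0 := hx
            rw [slope_def_field, sub_zero]
            exact (hslope x hx0).symm
          exact hder.deriv
    have hval : iteratedDeriv (m+1) f 0 / (((m+1).factorial : ℕ) : ℝ)
        * (qPoch 0 0 (m+1) / (1 - 0) ^ (m+1)) = c (m+1) := by
      simp [qPoch, hc]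
    rw [hval]
    have hl := tendsto_lower (m+1) f c hpeano (m+1) le_rfl
    refine hl.congr' ?_
    filter_upwards [self_mem_nhdsWithin] with x hx
    exact ((key (m+1) le_rfl).1 x hx).symm
  · have h1q : (1:ℝ) - q ≠ 0 := sub_ne_zero.2 (Ne.symm hq)
    have h1qN : ((1:ℝ) - q) ^ (m+1) ≠ 0 := pow_ne_zero _ h1q
    set R : ℝ → ℝ := fun y => f y - ∑ j ∈ Finset.range (m+1+1), c j * y ^ j with hR
    have hpeanoR : Filter.Tendsto (fun x => R x / x ^ (m+1))
        (nhdsWithin (0:ℝ) {0}ᶜ) (nhds 0) := hpeano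
    have hcomp : ∀ k : ℕ, Filter.Tendsto (fun x : ℝ => R (q^k * x) / (q^k * x) ^ (m+1))
        (nhdsWithin (0:ℝ) {0}ᶜ) (nhds 0) := by
      intro k
      have hqk : (q:ℝ)^k ≠ 0 := pow_ne_zero _ hq0
      have hmap : Filter.Tendsto (fun x : ℝ => q^k * x)
          (nhdsWithin (0:ℝ) {0}ᶜ) (nhdsWithin (0:ℝ) {0}ᶜ) := by
        apply tendsto_nhdsWithin_of_tendsto_nhds_of_eventually_within
        · have ht : Filter.Tendsto (fun x : ℝ => q^k * x) (nhds 0) (nhds (q^k * 0)) :=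
            (continuous_const.mul continuous_id).tendsto 0
          rw [mul_zero] at ht
          exact ht.mono_left nhdsWithin_le_nhds
        · filter_upwards [self_mem_nhdsWithin] with x hx
          exact mul_ne_zero hqk hx
      exact hpeanoR.comp hmap
    set E : ℝ → ℝ := fun x => ∑ k ∈ Finset.range (m+1+1),
        qw q (m+1) k * (q^k) ^ (m+1) / (1-q) ^ (m+1) * (R (q^k * x) / (q^k * x) ^ (m+1))
      with hE
    have hEten : Filter.Tendsto E (nhdsWithin (0:ℝ) {0}ᶜ) (nhds 0) := by
      rw [hE]
      have ht := tendsto_finset_sum (Finset.range (m+1+1))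
        (fun k (_ : k ∈ Finset.range (m+1+1)) =>
          (hcomp k).const_mul (qw q (m+1) k * (q^k) ^ (m+1) / (1-q) ^ (m+1)))
      simpa using ht
    have hKten : Filter.Tendsto
        (fun x : ℝ => c (m+1) * (qPoch q q (m+1) / (1-q) ^ (m+1)) + E x)
        (nhdsWithin (0:ℝ) {0}ᶜ)
        (nhds (c (m+1) * (qPoch q q (m+1) / (1-q) ^ (m+1)) + 0)) :=
      tendsto_const_nhds.add hEten
    rw [add_zero] at hKten
    have hgoalval : iteratedDeriv (m+1) f 0 / (((m+1).factorial : ℕ) : ℝ)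
        * (qPoch q q (m+1) / (1 - q) ^ (m+1))
        = c (m+1) * (qPoch q q (m+1) / (1-q) ^ (m+1)) := rfl
    rw [hgoalval]
    refine hKten.congr' ?_
    filter_upwards [self_mem_nhdsWithin] with x hx
    have hx0 : x ≠ 0 := hx
    have hxN : x ^ (m+1) ≠ 0 := pow_ne_zero _ hx0
    rw [qDeriv_iterate_formula q hq0 hq f (m+1) x hx0]
    have hfdecomp : ∀ k : ℕ, f (q^k * x)
        = (∑ j ∈ Finset.range (m+1+1), c j * (q^k * x) ^ j) + R (q^k * x) := by
      intro k; rw [hR]; ring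
    have hsum : ∑ k ∈ Finset.range (m+1+1), qw q (m+1) k * f (q^k * x)
        = (∑ k ∈ Finset.range (m+1+1), qw q (m+1) k
              * (∑ j ∈ Finset.range (m+1+1), c j * (q^k * x) ^ j))
          + ∑ k ∈ Finset.range (m+1+1), qw q (m+1) k * R (q^k * x) := by
      rw [← Finset.sum_add_distrib]
      exact Finset.sum_congr rfl fun k _ => by rw [hfdecomp k]; ring
    have hA : (∑ k ∈ Finset.range (m+1+1), qw q (m+1) k
          * (∑ j ∈ Finset.range (m+1+1), c j * (q^k * x) ^ j))
        = c (m+1) * x ^ (m+1) * qPoch q q (m+1) := by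
      have h1 : ∀ k ∈ Finset.range (m+1+1), qw q (m+1) k
            * (∑ j ∈ Finset.range (m+1+1), c j * (q^k * x) ^ j)
          = ∑ j ∈ Finset.range (m+1+1), c j * x ^ j * (qw q (m+1) k * (q^j) ^ k) := by
        intro k _
        rw [Finset.mul_sum]
        refine Finset.sum_congr rfl fun j _ => ?_
        rw [mul_pow, ← pow_mul, ← pow_mul, Nat.mul_comm k j]
        ring
      rw [Finset.sum_congr rfl h1, Finset.sum_comm]
      have h2 : ∀ j ∈ Finset.range (m+1+1),
          (∑ k ∈ Finset.range (m+1+1), c j * x ^ j * (qw q (m+1) k * (q^j) ^ k))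
          = c j * x ^ j * ∏ i ∈ Finset.range (m+1), (1 - q^j * q⁻¹^i) := by
        intro j _
        rw [← Finset.mul_sum, qw_pow q j (m+1)]
      rw [Finset.sum_congr rfl h2, Finset.sum_range_succ]
      have h3 : ∀ j ∈ Finset.range (m+1),
          c j * x ^ j * ∏ i ∈ Finset.range (m+1), (1 - q^j * q⁻¹^i) = 0 := by
        intro j hj
        have hz : (∏ i ∈ Finset.range (m+1), (1 - q^j * q⁻¹^i)) = 0 :=
          Finset.prod_eq_zero hj
            (by rw [← mul_pow, mul_inv_cancel₀ hq0, one_pow, sub_self])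
        rw [hz, mul_zero]
      rw [Finset.sum_eq_zero h3, zero_add]
      have hpoch : (∏ i ∈ Finset.range (m+1), (1 - q^(m+1) * q⁻¹^i)) = qPoch q q (m+1) := by
        rw [qPoch, ← Finset.prod_range_reflect]
        refine Finset.prod_congr rfl fun i hi => ?_
        have hiN : i < m+1 := Finset.mem_range.1 hi
        have h5 : q ^ (m+1) * q⁻¹ ^ (m+1-1-i) = q ^ (i+1) := by
          have hle : (m+1-1-i) ≤ m+1 := by omega
          have h6 := pow_sub_mul_pow q hle
          rw [inv_pow, ← h6, mul_inv_cancel_right₀ (pow_ne_zero _ hq0)]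
          congr 1; omega
        rw [h5, pow_succ']
      rw [hpoch]
    rw [hsum, hA, add_div, Finset.sum_div, hE]
    congr 1
    · field_simp
    · refine Finset.sum_congr rfl fun k hk => ?_
      have hqk : (q:ℝ)^k ≠ 0 := pow_ne_zero _ hq0
      have h6 : ((q^k * x):ℝ) ^ (m+1) ≠ 0 := pow_ne_zero _ (mul_ne_zero hqk hx0)
      field_simp
      ring
end

section
/- Let f : ℝ → ℝ be defined on an interval (-ρ, ρ) with ρ > 0, let n be a positive integer, and suppose f^(n)(0) exists. Then for all x with 0 < |x| < ρ one has x^n · (D_0^n f)(x) = f(x) - Σ_{k=0}^{n-1} (f^(k)(0)/k!) x^k, where D_0 is the q-derivative operator with q = 0, i.e. D_0 f(x) = (f(x) - f(0))/x for x ≠ 0 and D_0 f(0) = f'(0). -/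
open Filter Finset

/-- Peano form of Taylor's theorem at `0`. -/
lemma peano_taylor (k : ℕ) : ∀ f : ℝ → ℝ,
    (∀ j < k, ∀ᶠ x in nhds (0 : ℝ), DifferentiableAt ℝ (iteratedDeriv j f) x) →
    DifferentiableAt ℝ (iteratedDeriv k f) 0 →
    Tendsto (fun x : ℝ =>
        (f x - ∑ j ∈ Finset.range (k + 2), iteratedDeriv j f 0 / j.factorial * x ^ j) / x ^ (k + 1))
      (nhdsWithin 0 {(0 : ℝ)}ᶜ) (nhds 0) := by
  induction k with
  | zero =>
    intro f _ h2
    rw [iteratedDeriv_zero] at h2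
    have hs := hasDerivAt_iff_tendsto_slope.mp h2.hasDerivAt
    have hs' := hs.sub_const (deriv f 0)
    rw [sub_self] at hs'
    refine hs'.congr' ?_
    filter_upwards [self_mem_nhdsWithin] with x hx
    have hxne : (x : ℝ) ≠ 0 := hx
    rw [slope_def_field]
    simp only [Finset.sum_range_succ, Finset.sum_range_zero, iteratedDeriv_zero,
      iteratedDeriv_one, Nat.factorial_zero, Nat.factorial_one, pow_zero, pow_one]
    field_simp
    ring
  | succ k ih =>
    intro f h1 h2
    set c : ℕ → ℝ := fun j => iteratedDeriv j f 0 / j.factorial with hc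
    -- derivative of the polynomial part
    have hP : ∀ x : ℝ, HasDerivAt (fun x : ℝ => ∑ j ∈ Finset.range (k + 3), c j * x ^ j)
        (∑ i ∈ Finset.range (k + 2), ((i + 1 : ℝ) * c (i + 1)) * x ^ i) x := by
      intro x
      have h1' : HasDerivAt (fun x : ℝ => ∑ j ∈ Finset.range (k + 3), c j * x ^ j)
          (∑ j ∈ Finset.range (k + 3), c j * (j * x ^ (j - 1))) x :=
        HasDerivAt.fun_sum fun j _ => (hasDerivAt_pow j x).const_mul (c j)
      convert h1' using 1
      rw [Finset.sum_range_succ' (fun j => c j * (j * x ^ (j - 1))) (k + 2)]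
      simp only [Nat.cast_zero, zero_mul, mul_zero, add_zero, Nat.add_sub_cancel,
        Nat.cast_add, Nat.cast_one]
      refine Finset.sum_congr rfl fun i _ => ?_
      ring
    have hfd : ∀ᶠ x in nhds (0 : ℝ), DifferentiableAt ℝ f x := by
      have := h1 0 (Nat.succ_pos k)
      simpa [iteratedDeriv_zero] using this
    have hfd0 : DifferentiableAt ℝ f 0 := hfd.self_of_nhds
    -- numerator and denominator for L'Hôpital
    have hN : ∀ᶠ x in nhdsWithin (0 : ℝ) {(0 : ℝ)}ᶜ,
        HasDerivAt (fun x : ℝ => f x - ∑ j ∈ Finset.range (k + 3), c j * x ^ j)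
          (deriv f x - ∑ i ∈ Finset.range (k + 2), ((i + 1 : ℝ) * c (i + 1)) * x ^ i) x := by
      refine eventually_nhdsWithin_of_eventually_nhds ?_
      filter_upwards [hfd] with x hx
      exact hx.hasDerivAt.sub (hP x)
    have hD : ∀ᶠ x in nhdsWithin (0 : ℝ) {(0 : ℝ)}ᶜ,
        HasDerivAt (fun x : ℝ => x ^ (k + 2)) (((k : ℝ) + 2) * x ^ (k + 1)) x := by
      refine Eventually.of_forall fun x => ?_
      have := hasDerivAt_pow (k + 2) x
      refine this.congr_deriv ?_
      rw [show k + 2 - 1 = k + 1 from rfl]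
      simp
    have hD' : ∀ᶠ x in nhdsWithin (0 : ℝ) {(0 : ℝ)}ᶜ,
        ((k : ℝ) + 2) * x ^ (k + 1) ≠ 0 := by
      filter_upwards [self_mem_nhdsWithin] with x hx
      have hxne : (x : ℝ) ≠ 0 := hx
      positivity
    have hN0 : Tendsto (fun x : ℝ => f x - ∑ j ∈ Finset.range (k + 3), c j * x ^ j)
        (nhdsWithin 0 {(0 : ℝ)}ᶜ) (nhds 0) := by
      have hcont : ContinuousAt (fun x : ℝ => f x - ∑ j ∈ Finset.range (k + 3), c j * x ^ j) 0 :=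
        hfd0.continuousAt.sub (by fun_prop)
      have ht : Tendsto (fun x : ℝ => f x - ∑ j ∈ Finset.range (k + 3), c j * x ^ j)
          (nhdsWithin (0 : ℝ) {(0 : ℝ)}ᶜ)
          (nhds (f 0 - ∑ j ∈ Finset.range (k + 3), c j * (0 : ℝ) ^ j)) :=
        hcont.tendsto.mono_left nhdsWithin_le_nhds
      convert ht using 2
      rw [Finset.sum_range_succ']
      simp [hc, zero_pow]
    have hD0 : Tendsto (fun x : ℝ => x ^ (k + 2)) (nhdsWithin 0 {(0 : ℝ)}ᶜ) (nhds 0) := by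
      have : ContinuousAt (fun x : ℝ => x ^ (k + 2)) 0 := by fun_prop
      have h : Tendsto (fun x : ℝ => x ^ (k + 2)) (nhdsWithin (0 : ℝ) {(0 : ℝ)}ᶜ)
          (nhds ((0 : ℝ) ^ (k + 2))) := this.tendsto.mono_left nhdsWithin_le_nhds
      simpa using h
    -- the quotient of derivatives tends to 0, by the inductive hypothesis for `deriv f`
    have hih := ih (deriv f)
      (fun j hj => by
        have := h1 (j + 1) (by omega)
        rwa [iteratedDeriv_succ'] at this)
      (by rwa [iteratedDeriv_succ'] at h2)
    have hdiv : Tendsto (fun x : ℝ =>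
        (deriv f x - ∑ i ∈ Finset.range (k + 2), ((i + 1 : ℝ) * c (i + 1)) * x ^ i) /
          (((k : ℝ) + 2) * x ^ (k + 1))) (nhdsWithin 0 {(0 : ℝ)}ᶜ) (nhds 0) := by
      have hmul := hih.div_const ((k : ℝ) + 2)
      rw [zero_div] at hmul
      have hterm : ∀ i : ℕ, iteratedDeriv i (deriv f) 0 / (i.factorial : ℝ)
          = ((i : ℝ) + 1) * c (i + 1) := by
        intro i
        rw [hc]
        simp only [← iteratedDeriv_succ']
        rw [Nat.factorial_succ]
        push_cast
        have hfac : (i.factorial : ℝ) ≠ 0 := Nat.cast_ne_zero.mpr i.factorial_ne_zero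
        field_simp
      have hsum : ∀ x : ℝ, ∑ j ∈ Finset.range (k + 2), iteratedDeriv j (deriv f) 0 / (j.factorial : ℝ) * x ^ j
          = ∑ i ∈ Finset.range (k + 2), ((i : ℝ) + 1) * c (i + 1) * x ^ i :=
        fun x => Finset.sum_congr rfl fun i _ => by rw [hterm]
      refine hmul.congr' ?_
      filter_upwards [] with x
      rw [mul_comm ((k : ℝ) + 2) (x ^ (k + 1)), ← div_div, hsum x]
    have := HasDerivAt.lhopital_zero_nhdsNE hN hD hD' hN0 hD0 hdiv
    exact this

/-- If `f^{(n)}(0)` exists, then for `0 < |x| < ρ`,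
`x^n ⬝ (D_0^n f)(x) = f x - ∑_{k=0}^{n-1} (f^{(k)}(0)/k!) x^k`. -/
theorem qDeriv_zero_iterate_eq (f : ℝ → ℝ) (ρ : ℝ) (hρ : 0 < ρ) (n : ℕ) (hn : 0 < n)
    (hf : ∀ k < n - 1, ∀ᶠ x in nhds (0 : ℝ), DifferentiableAt ℝ (iteratedDeriv k f) x)
    (hf' : DifferentiableAt ℝ (iteratedDeriv (n - 1) f) 0) :
    ∀ x : ℝ, 0 < |x| → |x| < ρ →
      x ^ n * ((qDeriv 0)^[n] f) x =
        f x - ∑ k ∈ Finset.range n, iteratedDeriv k f 0 / k.factorial * x ^ k := by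
  have hd0 : ∀ m, m ≤ n - 1 → DifferentiableAt ℝ (iteratedDeriv m f) 0 := by
    intro m hm
    rcases eq_or_lt_of_le hm with h | h
    · rwa [h]
    · exact (hf m h).self_of_nhds
  have key : ∀ m, m ≤ n →
      ((qDeriv 0)^[m] f 0 = iteratedDeriv m f 0 / m.factorial ∧
        ∀ x : ℝ, x ≠ 0 → x ^ m * ((qDeriv 0)^[m] f) x =
          f x - ∑ k ∈ Finset.range m, iteratedDeriv k f 0 / k.factorial * x ^ k) := by
    intro m
    induction m with
    | zero =>
      intro _
      constructor
      · simp
      · intro x hx; simp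
    | succ m ih =>
      intro hm
      obtain ⟨ih1, ih2⟩ := ih (Nat.le_of_succ_le hm)
      have hpe := peano_taylor m f (fun j hj => hf j (by omega)) (hd0 m (by omega))
      have hslope : Tendsto (slope ((qDeriv 0)^[m] f) 0) (nhdsWithin 0 {(0 : ℝ)}ᶜ)
          (nhds (iteratedDeriv (m + 1) f 0 / (m + 1).factorial)) := by
        have hadd := hpe.add_const (iteratedDeriv (m + 1) f 0 / (m + 1).factorial)
        rw [zero_add] at hadd
        refine hadd.congr' ?_
        filter_upwards [self_mem_nhdsWithin] with x hx
        have hxne : (x : ℝ) ≠ 0 := hx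
        have hgx : ((qDeriv 0)^[m] f) x =
            (f x - ∑ k ∈ Finset.range m, iteratedDeriv k f 0 / k.factorial * x ^ k) / x ^ m := by
          rw [eq_div_iff (pow_ne_zero _ hxne), mul_comm, ih2 x hxne]
        rw [slope_def_field, hgx, ih1]
        rw [Finset.sum_range_succ, Finset.sum_range_succ]
        have hfm : ((m.factorial : ℝ)) ≠ 0 := Nat.cast_ne_zero.mpr m.factorial_ne_zero
        have hfm1 : (((m + 1).factorial : ℝ)) ≠ 0 := Nat.cast_ne_zero.mpr (m + 1).factorial_ne_zero
        field_simp
        ring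
      have hder : HasDerivAt ((qDeriv 0)^[m] f)
          (iteratedDeriv (m + 1) f 0 / (m + 1).factorial) 0 :=
        hasDerivAt_iff_tendsto_slope.mpr hslope
      constructor
      · rw [Function.iterate_succ_apply']
        simp only [qDeriv, if_pos rfl]
        exact hder.deriv
      · intro x hx
        rw [Function.iterate_succ_apply']
        have hq : qDeriv 0 ((qDeriv 0)^[m] f) x =
            (((qDeriv 0)^[m] f) x - ((qDeriv 0)^[m] f) 0) / x := by
          simp [qDeriv, hx]
        have hgx : ((qDeriv 0)^[m] f) x =
            (f x - ∑ k ∈ Finset.range m, iteratedDeriv k f 0 / k.factorial * x ^ k) / x ^ m := by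
          rw [eq_div_iff (pow_ne_zero _ hx), mul_comm, ih2 x hx]
        rw [hq, hgx, ih1, Finset.sum_range_succ]
        field_simp
        ring
  intro x hx _
  exact (key n le_rfl).2 x (by simpa using hx.ne')
end

section
/- Let q be a real number with q ≠ 0, q ≠ 1 and q ≠ -1, let n be a positive integer, let f : ℝ → ℝ be defined on (-ρ, ρ) with ρ > 0 and suppose f^(n)(0) exists. Define F(x) = Σ_{k=0}^{n} (-1)^k q^{-k(n-1) + C(k,2)} [n choose k]_q f(q^k x). Then F is n times differentiable at 0 with F^(m)(0) = 0 for m = 0, 1, ..., n-1 and F^(n)(0) = (q;q)_n f^(n)(0). -/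
open Filter Finset

/-- The `q`-binomial coefficient `[n choose k]_q = (q;q)_n / ((q;q)_k (q;q)_{n-k})`. -/
noncomputable def qBinom (q : ℝ) (n k : ℕ) : ℝ :=
  qPoch q q n / (qPoch q q k * qPoch q q (n - k))

lemma pow_ne_one' {q : ℝ} (hq1 : q ≠ 1) (hqm1 : q ≠ -1) (j : ℕ) : q ^ (j + 1) ≠ 1 := by
  have habs : |q| ≠ 1 := by
    intro h
    rcases (abs_eq (by norm_num : (0:ℝ) ≤ 1)).1 h with h | h <;> simp_all
  intro h
  have h' : |q| ^ (j + 1) = 1 := by rw [← abs_pow, h, abs_one]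
  rcases lt_or_gt_of_ne habs with hlt | hgt
  · have := pow_lt_one₀ (abs_nonneg q) hlt (Nat.succ_ne_zero j)
    rw [Nat.succ_eq_add_one] at this; linarith
  · have := one_lt_pow₀ hgt (Nat.succ_ne_zero j)
    rw [Nat.succ_eq_add_one] at this; linarith

lemma fac_ne {q : ℝ} (hq1 : q ≠ 1) (hqm1 : q ≠ -1) (j : ℕ) : 1 - q * q ^ j ≠ 0 := by
  have hq : q * q ^ j = q ^ (j + 1) := by ring
  rw [hq]
  exact sub_ne_zero.2 (Ne.symm (pow_ne_one' hq1 hqm1 j))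

lemma qPoch_ne {q : ℝ} (hq1 : q ≠ 1) (hqm1 : q ≠ -1) (m : ℕ) : qPoch q q m ≠ 0 :=
  Finset.prod_ne_zero_iff.2 fun j _ => fac_ne hq1 hqm1 j

lemma qPoch_zero (a q : ℝ) : qPoch a q 0 = 1 := by simp [qPoch]

lemma qPoch_succ (a q : ℝ) (m : ℕ) : qPoch a q (m + 1) = qPoch a q m * (1 - a * q ^ m) :=
  Finset.prod_range_succ _ _

lemma qBinom_self {q : ℝ} (hq1 : q ≠ 1) (hqm1 : q ≠ -1) (m : ℕ) : qBinom q m m = 1 := by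
  rw [qBinom, Nat.sub_self, qPoch_zero, mul_one, div_self (qPoch_ne hq1 hqm1 m)]

lemma qBinom_zero {q : ℝ} (hq1 : q ≠ 1) (hqm1 : q ≠ -1) (m : ℕ) : qBinom q m 0 = 1 := by
  rw [qBinom, Nat.sub_zero, qPoch_zero, one_mul, div_self (qPoch_ne hq1 hqm1 m)]

lemma qBinom_pascal {q : ℝ} (hq1 : q ≠ 1) (hqm1 : q ≠ -1) {n k : ℕ} (hk : k < n) :
    qBinom q (n + 1) (k + 1) = q ^ (k + 1) * qBinom q n (k + 1) + qBinom q n k := by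
  obtain ⟨j, rfl⟩ : ∃ j, n = k + 1 + j := ⟨n - (k + 1), by omega⟩
  have e1 : k + 1 + j + 1 - (k + 1) = j + 1 := by omega
  have e2 : k + 1 + j - (k + 1) = j := by omega
  have e3 : k + 1 + j - k = j + 1 := by omega
  rw [qBinom, qBinom, qBinom, e1, e2, e3]
  rw [show k+1+j+1 = (k+1+j)+1 from rfl, qPoch_succ, qPoch_succ q q k, qPoch_succ q q j]
  have hP1 := qPoch_ne hq1 hqm1 (q := q) (k + 1 + j)
  have hPk := qPoch_ne hq1 hqm1 (q := q) k
  have hPj := qPoch_ne hq1 hqm1 (q := q) j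
  have hfk := fac_ne hq1 hqm1 (q := q) k
  have hfj := fac_ne hq1 hqm1 (q := q) j
  field_simp
  ring

lemma qbt {q : ℝ} (hq1 : q ≠ 1) (hqm1 : q ≠ -1) (n : ℕ) (t : ℝ) :
    ∑ k ∈ range (n + 1), (-1 : ℝ) ^ k * q ^ (k.choose 2) * qBinom q n k * t ^ k
      = ∏ j ∈ range n, (1 - t * q ^ j) := by
  induction n generalizing t with
  | zero => simp [qBinom_zero hq1 hqm1]
  | succ n ih =>
    have hprod : ∏ j ∈ range (n + 1), (1 - t * q ^ j)
        = (∑ k ∈ range (n + 1), (-1 : ℝ) ^ k * q ^ (k.choose 2) * qBinom q n k * (t * q) ^ k)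
          * (1 - t) := by
      rw [Finset.prod_range_succ' (fun j => 1 - t * q ^ j) n]
      have hcg : ∏ k ∈ range n, (1 - t * q ^ (k + 1)) = ∏ j ∈ range n, (1 - (t * q) * q ^ j) :=
        Finset.prod_congr rfl (fun j _ => by ring)
      rw [hcg, ← ih (t * q)]
      norm_num
    rw [hprod]
    have expand : (∑ k ∈ range (n + 1), (-1 : ℝ) ^ k * q ^ (k.choose 2) * qBinom q n k * (t * q) ^ k)
        * (1 - t)
        = (∑ k ∈ range (n + 1), (-1 : ℝ) ^ k * q ^ (k.choose 2) * qBinom q n k * (t * q) ^ k)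
          - ∑ k ∈ range (n + 1), (-1 : ℝ) ^ k * q ^ (k.choose 2) * qBinom q n k * (t * q) ^ k * t := by
      rw [mul_sub, mul_one, Finset.sum_mul]
    rw [expand]
    rw [Finset.sum_range_succ' (fun k => (-1 : ℝ) ^ k * q ^ (k.choose 2) * qBinom q (n+1) k * t ^ k) (n+1)]
    rw [Finset.sum_range_succ' (fun k => (-1 : ℝ) ^ k * q ^ (k.choose 2) * qBinom q n k * (t * q) ^ k) n]
    rw [Finset.sum_range_succ (fun k => (-1 : ℝ) ^ k * q ^ (k.choose 2) * qBinom q n k * (t * q) ^ k * t) n]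
    rw [Finset.sum_range_succ (fun k => (-1 : ℝ) ^ (k+1) * q ^ ((k+1).choose 2) * qBinom q (n+1) (k+1) * t ^ (k+1)) n]
    simp only [qBinom_zero hq1 hqm1, pow_zero, Nat.choose_zero_right]
    have hchoose : ∀ m : ℕ, (m + 1).choose 2 = m.choose 2 + m := by
      intro m
      rw [Nat.choose_succ_succ]
      simp [Nat.choose_one_right, Nat.add_comm]
    have hlast : (-1 : ℝ) ^ (n+1) * q ^ ((n+1).choose 2) * qBinom q (n+1) (n+1) * t ^ (n+1)
        = -((-1 : ℝ) ^ n * q ^ (n.choose 2) * qBinom q n n * (t * q) ^ n * t) := by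
      rw [qBinom_self hq1 hqm1, qBinom_self hq1 hqm1, hchoose n]
      rw [pow_add, pow_add, mul_pow]
      ring
    have hterm : ∀ k ∈ range n,
        (-1 : ℝ) ^ (k+1) * q ^ ((k+1).choose 2) * qBinom q (n+1) (k+1) * t ^ (k+1)
        = (-1 : ℝ) ^ (k+1) * q ^ ((k+1).choose 2) * qBinom q n (k+1) * (t * q) ^ (k+1)
          - (-1 : ℝ) ^ k * q ^ (k.choose 2) * qBinom q n k * (t * q) ^ k * t := by
      intro k hk
      rw [qBinom_pascal hq1 hqm1 (Finset.mem_range.1 hk)]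
      rw [hchoose k, pow_add q (k.choose 2) k, mul_pow, mul_pow]
      ring
    rw [Finset.sum_congr rfl hterm, Finset.sum_sub_distrib, hlast]
    ring

/-- coefficient in the combination -/
noncomputable def qcoef (q : ℝ) (n k : ℕ) : ℝ :=
  (-1 : ℝ) ^ k * q ^ (-(k : ℤ) * ((n : ℤ) - 1) + (k.choose 2 : ℤ)) * qBinom q n k

lemma skey_eq {q : ℝ} (hq0 : q ≠ 0) (hq1 : q ≠ 1) (hqm1 : q ≠ -1) (n m : ℕ) :
    ∑ k ∈ range (n + 1), qcoef q n k * (q ^ k) ^ m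
      = ∏ j ∈ range n, (1 - q ^ ((m : ℤ) - n + 1) * q ^ j) := by
  rw [← qbt hq1 hqm1 n (q ^ ((m : ℤ) - n + 1))]
  apply Finset.sum_congr rfl
  intro k _
  unfold qcoef
  have h1 : ((q : ℝ) ^ k) ^ m = q ^ ((k : ℤ) * m) := by
    rw [← pow_mul, ← zpow_natCast q (k * m)]
    norm_cast
  have h2 : (q ^ ((m : ℤ) - n + 1)) ^ k = q ^ (((m : ℤ) - n + 1) * k) := by
    rw [← zpow_natCast (q ^ ((m : ℤ) - n + 1)) k, ← zpow_mul]
  have h3 : (q : ℝ) ^ (k.choose 2) = q ^ ((k.choose 2 : ℤ)) := (zpow_natCast _ _).symm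
  rw [h1, h2, h3]
  have hexp : (-(k : ℤ) * ((n : ℤ) - 1) + (k.choose 2 : ℤ)) + (k : ℤ) * m
      = (k.choose 2 : ℤ) + ((m : ℤ) - n + 1) * k := by ring
  have hqq : q ^ (-(k : ℤ) * ((n : ℤ) - 1) + (k.choose 2 : ℤ)) * q ^ ((k : ℤ) * m)
      = q ^ ((k.choose 2 : ℤ)) * q ^ (((m : ℤ) - n + 1) * k) := by
    rw [← zpow_add₀ hq0, ← zpow_add₀ hq0, hexp]
  linear_combination ((-1 : ℝ) ^ k * qBinom q n k) * hqq

lemma skey_lt {q : ℝ} (hq0 : q ≠ 0) (hq1 : q ≠ 1) (hqm1 : q ≠ -1) {n m : ℕ} (hm : m < n) :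
    ∑ k ∈ range (n + 1), qcoef q n k * (q ^ k) ^ m = 0 := by
  rw [skey_eq hq0 hq1 hqm1]
  apply Finset.prod_eq_zero (i := n - 1 - m) (Finset.mem_range.2 (by omega))
  have h1 : (q : ℝ) ^ (n - 1 - m) = q ^ (((n - 1 - m : ℕ) : ℤ)) := (zpow_natCast _ _).symm
  rw [h1, ← zpow_add₀ hq0]
  have h2 : ((m : ℤ) - n + 1) + ((n - 1 - m : ℕ) : ℤ) = 0 := by omega
  rw [h2, zpow_zero, sub_self]

lemma skey_n {q : ℝ} (hq0 : q ≠ 0) (hq1 : q ≠ 1) (hqm1 : q ≠ -1) (n : ℕ) :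
    ∑ k ∈ range (n + 1), qcoef q n k * (q ^ k) ^ n = qPoch q q n := by
  rw [skey_eq hq0 hq1 hqm1]
  have h1 : ((n : ℤ) - n + 1) = 1 := by ring
  rw [h1, zpow_one]
  rfl

/-- If `f^{(n)}(0)` exists and
`F(x) = ∑_{k=0}^n (-1)^k q^{-k(n-1)+C(k,2)} [n choose k]_q f(q^k x)`, then `F` is `n` times
differentiable at `0` with `F^{(m)}(0) = 0` for `m < n` and `F^{(n)}(0) = (q;q)_n f^{(n)}(0)`. -/
theorem iteratedDeriv_qCombination (q : ℝ) (hq0 : q ≠ 0) (hq1 : q ≠ 1) (hqm1 : q ≠ -1)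
    (n : ℕ) (hn : 0 < n) (f : ℝ → ℝ)
    (hf : ∀ k < n - 1, ∀ᶠ x in nhds (0 : ℝ), DifferentiableAt ℝ (iteratedDeriv k f) x)
    (hf' : DifferentiableAt ℝ (iteratedDeriv (n - 1) f) 0)
    (F : ℝ → ℝ)
    (hF : ∀ x : ℝ, F x = ∑ k ∈ Finset.range (n + 1),
      (-1 : ℝ) ^ k * q ^ (-(k : ℤ) * ((n : ℤ) - 1) + (k.choose 2 : ℤ)) *
        qBinom q n k * f (q ^ k * x)) :
    (∀ k < n - 1, ∀ᶠ x in nhds (0 : ℝ), DifferentiableAt ℝ (iteratedDeriv k F) x) ∧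
    DifferentiableAt ℝ (iteratedDeriv (n - 1) F) 0 ∧
    (∀ m < n, iteratedDeriv m F 0 = 0) ∧
    iteratedDeriv n F 0 = qPoch q q n * iteratedDeriv n f 0 := by
  set G : ℕ → ℝ → ℝ := fun m x =>
    ∑ k ∈ Finset.range (n + 1), qcoef q n k * (q ^ k) ^ m * iteratedDeriv m f (q ^ k * x)
    with hG
  -- scaling maps tend to 0
  have hT : ∀ k : ℕ, Tendsto (fun x : ℝ => q ^ k * x) (nhds 0) (nhds 0) := by
    intro k
    have hc : Continuous (fun x : ℝ => q ^ k * x) := continuous_const.mul continuous_id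
    have h := hc.tendsto (0 : ℝ)
    simpa using h
  -- the derivative recursion
  have hHas : ∀ (m : ℕ) (x : ℝ),
      (∀ k ∈ Finset.range (n + 1), DifferentiableAt ℝ (iteratedDeriv m f) (q ^ k * x)) →
      HasDerivAt (G m) (G (m + 1) x) x := by
    intro m x hd
    have hterm : ∀ k ∈ Finset.range (n + 1),
        HasDerivAt (fun y => qcoef q n k * (q ^ k) ^ m * iteratedDeriv m f (q ^ k * y))
          (qcoef q n k * (q ^ k) ^ (m + 1) * iteratedDeriv (m + 1) f (q ^ k * x)) x := by
      intro k hk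
      have h1 : HasDerivAt (iteratedDeriv m f) (iteratedDeriv (m + 1) f (q ^ k * x))
          (q ^ k * x) := by
        rw [iteratedDeriv_succ]
        exact (hd k hk).hasDerivAt
      have h2 : HasDerivAt (fun y : ℝ => q ^ k * y) (q ^ k) x := by
        simpa using (hasDerivAt_id x).const_mul (q ^ k)
      have h3 := (h1.comp x h2).const_mul (qcoef q n k * (q ^ k) ^ m)
      have harr : qcoef q n k * (q ^ k) ^ (m + 1) * iteratedDeriv (m + 1) f (q ^ k * x)
          = qcoef q n k * (q ^ k) ^ m * (iteratedDeriv (m + 1) f (q ^ k * x) * q ^ k) := by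
        rw [pow_succ]; ring
      rw [harr]
      exact h3
    exact HasDerivAt.fun_sum hterm
  -- eventual differentiability at scaled points
  have hediff : ∀ m : ℕ, (∀ᶠ y in nhds (0 : ℝ), DifferentiableAt ℝ (iteratedDeriv m f) y) →
      ∀ᶠ x in nhds (0 : ℝ), ∀ k ∈ Finset.range (n + 1),
        DifferentiableAt ℝ (iteratedDeriv m f) (q ^ k * x) := by
    intro m hm
    rw [eventually_all_finset]
    intro k _
    exact (hT k).eventually hm
  -- Claim A
  have hA : ∀ m : ℕ, m ≤ n - 1 → iteratedDeriv m F =ᶠ[nhds 0] G m := by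
    intro m
    induction m with
    | zero =>
      intro _
      apply Filter.Eventually.of_forall
      intro x
      simp only [iteratedDeriv_zero, hF x, hG, pow_zero, mul_one, qcoef]
    | succ m ih =>
      intro hm1
      have hm : m < n - 1 := by omega
      have heq := ih (by omega)
      have hev := hediff m (hf m hm)
      have h2 : deriv (G m) =ᶠ[nhds 0] G (m + 1) :=
        hev.mono fun x hx => (hHas m x hx).deriv
      rw [iteratedDeriv_succ]
      exact heq.deriv.trans h2
  -- differentiability at q^k * 0
  have hd0 : ∀ k ∈ Finset.range (n + 1),
      DifferentiableAt ℝ (iteratedDeriv (n - 1) f) (q ^ k * 0) := by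
    intro k _
    rw [mul_zero]
    exact hf'
  have hAn := hA (n - 1) le_rfl
  have hH0 := hHas (n - 1) 0 hd0
  refine ⟨?_, ?_, ?_, ?_⟩
  · intro k hk
    have hAk := hA k (by omega)
    have hGdiff : ∀ᶠ x in nhds (0 : ℝ), DifferentiableAt ℝ (G k) x :=
      (hediff k (hf k hk)).mono fun x hx => (hHas k x hx).differentiableAt
    have hAk' : ∀ᶠ x in nhds (0 : ℝ), iteratedDeriv k F =ᶠ[nhds x] G k :=
      hAk.eventually_nhds
    filter_upwards [hAk', hGdiff] with x hx1 hx2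
    exact hx1.differentiableAt_iff.2 hx2
  · exact hAn.differentiableAt_iff.2 hH0.differentiableAt
  · intro m hm
    rw [(hA m (by omega)).eq_of_nhds]
    have : G m 0 = (∑ k ∈ Finset.range (n + 1), qcoef q n k * (q ^ k) ^ m)
        * iteratedDeriv m f 0 := by
      rw [hG, Finset.sum_mul]
      apply Finset.sum_congr rfl
      intro k _
      rw [mul_zero]
    rw [this, skey_lt hq0 hq1 hqm1 hm, zero_mul]
  · have h4 : iteratedDeriv n F 0 = deriv (iteratedDeriv (n - 1) F) 0 := by
      rw [← iteratedDeriv_succ, show n - 1 + 1 = n by omega]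
    rw [h4, hAn.deriv_eq, hH0.deriv]
    have hGn : G (n - 1 + 1) 0 = (∑ k ∈ Finset.range (n + 1), qcoef q n k * (q ^ k) ^ n)
        * iteratedDeriv n f 0 := by
      rw [hG, Finset.sum_mul, show n - 1 + 1 = n by omega]
      apply Finset.sum_congr rfl
      intro k _
      rw [mul_zero]
    rw [hGn, skey_n hq0 hq1 hqm1, mul_comm]
end
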